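/- Let F be a gauge on ℝ² and F_a its associated gauge. For nonzero x, y ∈ ℝ², the condition [x,y] = F(x)·F_a(y) (i.e., x is Birkhoff orthogonal to y with respect to F) holds if and only if [y,-x] = F_a(y)·F_{a,a}(-x) (i.e., y is Birkhoff orthogonal to -x with respect to F_a). -/

import Mathlib

noncomputable section

/-- The determinant form `[x,y] = x₁y₂ − x₂y₁`. -/
def det2 (x y : ℝ × ℝ) : ℝ := x.1 * y.2 - x.2 * y.1

/-- A gauge (convex distance function) on ℝ². -/
def IsGauge (F : ℝ × ℝ → ℝ) : Prop :=
  (∀ x, 0 ≤ F x) ∧ (∀ x, F x = 0 ↔ x = 0) ∧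
  (∀ (l : ℝ) (x : ℝ × ℝ), 0 < l → F (l • x) = l * F x) ∧
  (∀ x y, F (x + y) ≤ F x + F y)

/-- The associated gauge `F_a(x) = sup {[y,x] : F(y) = 1}`. -/
def assocGauge (F : ℝ × ℝ → ℝ) (x : ℝ × ℝ) : ℝ :=
  sSup {d : ℝ | ∃ y, F y = 1 ∧ d = det2 y x}

namespace BirkhoffAux

variable {F : ℝ × ℝ → ℝ}

lemma F_zero (hF : IsGauge F) : F 0 = 0 := (hF.2.1 0).2 rfl

lemma F_pos (hF : IsGauge F) {x : ℝ × ℝ} (hx : x ≠ 0) : 0 < F x :=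
  lt_of_le_of_ne (hF.1 x) fun h => hx ((hF.2.1 x).1 h.symm)

/-- Upper bound: `F z ≤ C * ‖z‖`. -/
lemma F_upper (hF : IsGauge F) :
    ∃ C > 0, ∀ z : ℝ × ℝ, F z ≤ C * ‖z‖ := by
  set C : ℝ := F (1, 0) + F (-1, 0) + F (0, 1) + F (0, -1) + 1 with hC
  have hCpos : 0 < C := by
    have := hF.1 (1, 0); have := hF.1 (-1, 0); have := hF.1 (0, 1); have := hF.1 (0, -1)
    positivity
  refine ⟨C, hCpos, fun z => ?_⟩
  have hsmul : ∀ (a : ℝ) (e : ℝ × ℝ), F (a • e) ≤ |a| * (F e + F (-e)) := by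
    intro a e
    rcases lt_trichotomy a 0 with h | h | h
    · have : a • e = (-a) • (-e) := by simp
      rw [this, hF.2.2.1 (-a) (-e) (by linarith)]
      have : |a| = -a := abs_of_neg h
      rw [this]
      nlinarith [hF.1 e, hF.1 (-e)]
    · simp [h, F_zero hF]
    · rw [hF.2.2.1 a e h, abs_of_pos h]
      nlinarith [hF.1 e, hF.1 (-e)]
  have hz : z = z.1 • ((1 : ℝ), (0 : ℝ)) + z.2 • ((0 : ℝ), (1 : ℝ)) := by
    ext <;> simp
  calc F z = F (z.1 • ((1 : ℝ), (0 : ℝ)) + z.2 • ((0 : ℝ), (1 : ℝ))) := by rw [← hz]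
    _ ≤ F (z.1 • ((1 : ℝ), (0 : ℝ))) + F (z.2 • ((0 : ℝ), (1 : ℝ))) := hF.2.2.2 _ _
    _ ≤ |z.1| * (F (1, 0) + F (-(1, 0))) + |z.2| * (F (0, 1) + F (-(0, 1))) :=
        add_le_add (hsmul _ _) (hsmul _ _)
    _ ≤ C * ‖z‖ := by
        have h1 : |z.1| ≤ ‖z‖ := by
          simpa using norm_fst_le z
        have h2 : |z.2| ≤ ‖z‖ := by
          simpa using norm_snd_le z
        have hn : (0:ℝ) ≤ ‖z‖ := norm_nonneg z
        have e1 : (-((1:ℝ), (0:ℝ)) : ℝ × ℝ) = (-1, 0) := by ext <;> simp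
        have e2 : (-((0:ℝ), (1:ℝ)) : ℝ × ℝ) = (0, -1) := by ext <;> simp
        rw [e1, e2, hC]
        nlinarith [hF.1 ((1:ℝ),(0:ℝ)), hF.1 ((-1:ℝ),(0:ℝ)), hF.1 ((0:ℝ),(1:ℝ)),
          hF.1 ((0:ℝ),(-1:ℝ)), abs_nonneg z.1, abs_nonneg z.2]

lemma F_continuous (hF : IsGauge F) : Continuous F := by
  obtain ⟨C, hC, hub⟩ := F_upper hF
  have hlip : LipschitzWith (Real.toNNReal C) F := by
    refine LipschitzWith.of_dist_le_mul fun u v => ?_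
    rw [Real.coe_toNNReal C hC.le, Real.dist_eq]
    have h1 : F u - F v ≤ C * ‖u - v‖ := by
      have := hF.2.2.2 (u - v) v
      simp only [sub_add_cancel] at this
      have := hub (u - v)
      linarith
    have h2 : F v - F u ≤ C * ‖u - v‖ := by
      have := hF.2.2.2 (v - u) u
      simp only [sub_add_cancel] at this
      have h3 := hub (v - u)
      rw [norm_sub_rev] at h3
      linarith
    rw [dist_eq_norm, abs_sub_le_iff]
    exact ⟨h1, h2⟩
  exact hlip.continuous

/-- Lower bound: `c * ‖z‖ ≤ F z`. -/
lemma F_lower (hF : IsGauge F) :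
    ∃ c > 0, ∀ z : ℝ × ℝ, c * ‖z‖ ≤ F z := by
  have hcomp : IsCompact (Metric.sphere (0 : ℝ × ℝ) 1) := isCompact_sphere 0 1
  have hne : (Metric.sphere (0 : ℝ × ℝ) 1).Nonempty := by
    refine ⟨((1 : ℝ), (0 : ℝ)), ?_⟩
    simp [Prod.norm_def]
  obtain ⟨z₀, hz₀, hmin⟩ := hcomp.exists_isMinOn hne ((F_continuous hF).continuousOn)
  have hz₀norm : ‖z₀‖ = 1 := by simpa using hz₀
  have hz₀ne : z₀ ≠ 0 := by
    intro h; rw [h] at hz₀norm; simp at hz₀norm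
  refine ⟨F z₀, F_pos hF hz₀ne, fun z => ?_⟩
  rcases eq_or_ne z 0 with rfl | hz
  · simp [F_zero hF]
  · have hnz : (0:ℝ) < ‖z‖ := norm_pos_iff.2 hz
    have hmem : ‖z‖⁻¹ • z ∈ Metric.sphere (0 : ℝ × ℝ) 1 := by
      simp [norm_smul, abs_of_pos (inv_pos.2 hnz), inv_mul_cancel₀ hnz.ne']
    have h1 : F z₀ ≤ F (‖z‖⁻¹ • z) := hmin hmem
    have h2 : F (‖z‖⁻¹ • z) = ‖z‖⁻¹ * F z := hF.2.2.1 _ _ (inv_pos.2 hnz)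
    rw [h2] at h1
    calc F z₀ * ‖z‖ ≤ (‖z‖⁻¹ * F z) * ‖z‖ := by nlinarith
      _ = F z := by field_simp

/-- The defining set of `assocGauge F y` is nonempty. -/
lemma assoc_nonempty (hF : IsGauge F) (v : ℝ × ℝ) :
    {d : ℝ | ∃ z, F z = 1 ∧ d = det2 z v}.Nonempty := by
  have h1 : ((1:ℝ), (0:ℝ)) ≠ (0 : ℝ × ℝ) := by simp [Prod.ext_iff]
  have hpos := F_pos hF h1
  refine ⟨det2 ((F ((1:ℝ),(0:ℝ)))⁻¹ • ((1:ℝ),(0:ℝ))) v, (F ((1:ℝ),(0:ℝ)))⁻¹ • ((1:ℝ),(0:ℝ)), ?_, rfl⟩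
  rw [hF.2.2.1 _ _ (inv_pos.2 hpos), inv_mul_cancel₀ hpos.ne']

/-- The defining set of `assocGauge F y` is bounded above. -/
lemma assoc_bdd (hF : IsGauge F) (v : ℝ × ℝ) :
    BddAbove {d : ℝ | ∃ z, F z = 1 ∧ d = det2 z v} := by
  obtain ⟨c, hc, hlow⟩ := F_lower hF
  refine ⟨2 * c⁻¹ * ‖v‖, ?_⟩
  rintro d ⟨z, hz, rfl⟩
  have hcz : c * ‖z‖ ≤ 1 := by have := hlow z; rw [hz] at this; exact this
  have hznorm : ‖z‖ ≤ c⁻¹ := by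
    calc ‖z‖ = c⁻¹ * (c * ‖z‖) := by field_simp
      _ ≤ c⁻¹ * 1 := mul_le_mul_of_nonneg_left hcz (by positivity)
      _ = c⁻¹ := mul_one _
  have h1 : |z.1| ≤ ‖z‖ := by simpa using norm_fst_le z
  have h2 : |z.2| ≤ ‖z‖ := by simpa using norm_snd_le z
  have h3 : |v.1| ≤ ‖v‖ := by simpa using norm_fst_le v
  have h4 : |v.2| ≤ ‖v‖ := by simpa using norm_snd_le v
  have : det2 z v ≤ |z.1| * |v.2| + |z.2| * |v.1| := by
    have := abs_mul z.1 v.2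
    have := abs_mul z.2 v.1
    simp only [det2]
    nlinarith [le_abs_self (z.1 * v.2), neg_abs_le (z.2 * v.1), abs_nonneg (z.1*v.2)]
  have hvn : (0:ℝ) ≤ ‖v‖ := norm_nonneg v
  have hcinv : (0:ℝ) ≤ c⁻¹ := by positivity
  have t1 : |z.1| * |v.2| ≤ c⁻¹ * ‖v‖ :=
    mul_le_mul (h1.trans hznorm) h4 (abs_nonneg _) hcinv
  have t2 : |z.2| * |v.1| ≤ c⁻¹ * ‖v‖ :=
    mul_le_mul (h2.trans hznorm) h3 (abs_nonneg _) hcinv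
  linarith

/-- Cauchy–Schwarz type inequality. -/
lemma det_le (hF : IsGauge F) {x : ℝ × ℝ} (hx : x ≠ 0) (v : ℝ × ℝ) :
    det2 x v ≤ F x * assocGauge F v := by
  have hpos := F_pos hF hx
  have hz : F ((F x)⁻¹ • x) = 1 := by
    rw [hF.2.2.1 _ _ (inv_pos.2 hpos), inv_mul_cancel₀ hpos.ne']
  have hmem : det2 ((F x)⁻¹ • x) v ∈ {d : ℝ | ∃ z, F z = 1 ∧ d = det2 z v} := ⟨_, hz, rfl⟩
  have hle : det2 ((F x)⁻¹ • x) v ≤ assocGauge F v := le_csSup (assoc_bdd hF v) hmem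
  have hdet : det2 ((F x)⁻¹ • x) v = (F x)⁻¹ * det2 x v := by
    simp [det2, Prod.smul_fst, Prod.smul_snd, smul_eq_mul]; ring
  rw [hdet] at hle
  calc det2 x v = F x * ((F x)⁻¹ * det2 x v) := by field_simp
    _ ≤ F x * assocGauge F v := by nlinarith

/-- Evaluate a linear functional on `ℝ × ℝ` in coordinates. -/
lemma g_eval (g : (ℝ × ℝ) →ₗ[ℝ] ℝ) (z : ℝ × ℝ) :
    g z = z.1 * g ((1:ℝ),(0:ℝ)) + z.2 * g ((0:ℝ),(1:ℝ)) := by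
  have hz : z = z.1 • ((1:ℝ),(0:ℝ)) + z.2 • ((0:ℝ),(1:ℝ)) := by ext <;> simp
  conv_lhs => rw [hz]
  rw [map_add, LinearMap.map_smul, LinearMap.map_smul, smul_eq_mul, smul_eq_mul]

/-- Hahn–Banach: a supporting functional at `x`, realized by a vector `w`. -/
lemma exists_support (hF : IsGauge F) {x : ℝ × ℝ} (hx : x ≠ 0) :
    ∃ w : ℝ × ℝ, (∀ z, det2 z w ≤ F z) ∧ det2 x w = F x := by
  have N_hom : ∀ c : ℝ, 0 < c → ∀ z : ℝ × ℝ, F (c • z) = c * F z := fun c hc z =>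
    hF.2.2.1 c z hc
  have hf : ∀ v : (LinearPMap.mkSpanSingleton (K := ℝ) (σ := RingHom.id ℝ) x (F x) hx).domain,
      LinearPMap.mkSpanSingleton (K := ℝ) (σ := RingHom.id ℝ) x (F x) hx v ≤ F v := by
    rintro ⟨v, hv⟩
    obtain ⟨a, rfl⟩ := Submodule.mem_span_singleton.1 hv
    have happ : LinearPMap.mkSpanSingleton (K := ℝ) (σ := RingHom.id ℝ) x (F x) hx ⟨a • x, hv⟩ = a * F x := by
      rw [LinearPMap.mkSpanSingleton'_apply, smul_eq_mul, RingHom.id_apply]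
    rw [happ]
    rcases lt_trichotomy a 0 with h | h | h
    · have h1 : (0:ℝ) ≤ F (a • x) := hF.1 _
      have h2 : a * F x ≤ 0 := mul_nonpos_of_nonpos_of_nonneg h.le (hF.1 x)
      exact h2.trans h1
    · simp [h, F_zero hF]
    · rw [hF.2.2.1 a x h]
  obtain ⟨g, hg_ext, hg_le⟩ :=
    exists_extension_of_le_sublinear (LinearPMap.mkSpanSingleton (K := ℝ) (σ := RingHom.id ℝ) x (F x) hx)
      F N_hom hF.2.2.2 hf
  have hgx : g x = F x := by
    have hmem : x ∈ (LinearPMap.mkSpanSingleton (K := ℝ) (σ := RingHom.id ℝ) x (F x) hx).domain :=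
      Submodule.mem_span_singleton_self x
    have := hg_ext ⟨x, hmem⟩
    rw [this]
    exact LinearPMap.mkSpanSingleton_apply ℝ ℝ hx (F x)
  refine ⟨(-(g ((0:ℝ),(1:ℝ))), g ((1:ℝ),(0:ℝ))), fun z => ?_, ?_⟩
  · have h1 : det2 z (-(g ((0:ℝ),(1:ℝ))), g ((1:ℝ),(0:ℝ))) = g z := by
      rw [g_eval g z]; simp only [det2]; ring
    rw [h1]
    exact hg_le z
  · have h1 : det2 x (-(g ((0:ℝ),(1:ℝ))), g ((1:ℝ),(0:ℝ))) = g x := by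
      rw [g_eval g x]; simp only [det2]; ring
    rw [h1, hgx]

/-- Bipolar: `F_{a,a}(-x) = F x`. -/
lemma assoc_assoc (hF : IsGauge F) {x : ℝ × ℝ} (hx : x ≠ 0) :
    assocGauge (assocGauge F) (-x) = F x := by
  obtain ⟨w, hwle, hwx⟩ := exists_support hF hx
  have hFx := F_pos hF hx
  -- `assocGauge F w = 1`
  have haw : assocGauge F w = 1 := by
    apply le_antisymm
    · apply csSup_le (assoc_nonempty hF w)
      rintro d ⟨z, hz, rfl⟩
      have := hwle z
      rw [hz] at this; exact this
    · have hz : F ((F x)⁻¹ • x) = 1 := by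
        rw [hF.2.2.1 _ _ (inv_pos.2 hFx), inv_mul_cancel₀ hFx.ne']
      have hd : det2 ((F x)⁻¹ • x) w = 1 := by
        have : det2 ((F x)⁻¹ • x) w = (F x)⁻¹ * det2 x w := by
          simp [det2, Prod.smul_fst, Prod.smul_snd, smul_eq_mul]; ring
        rw [this, hwx, inv_mul_cancel₀ hFx.ne']
      have : (1:ℝ) ∈ {d : ℝ | ∃ z, F z = 1 ∧ d = det2 z w} := ⟨_, hz, hd.symm⟩
      exact le_csSup (assoc_bdd hF w) this
  -- now compute the sup defining `assocGauge (assocGauge F) (-x)`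
  have hset : assocGauge (assocGauge F) (-x) =
      sSup {d : ℝ | ∃ u, assocGauge F u = 1 ∧ d = det2 u (-x)} := rfl
  rw [hset]
  have hne : {d : ℝ | ∃ u, assocGauge F u = 1 ∧ d = det2 u (-x)}.Nonempty :=
    ⟨det2 w (-x), w, haw, rfl⟩
  apply le_antisymm
  · apply csSup_le hne
    rintro d ⟨u, hu, rfl⟩
    have hdet : det2 u (-x) = det2 x u := by simp [det2]; ring
    rw [hdet]
    calc det2 x u ≤ F x * assocGauge F u := det_le hF hx u
      _ = F x := by rw [hu, mul_one]
  · have hmem : F x ∈ {d : ℝ | ∃ u, assocGauge F u = 1 ∧ d = det2 u (-x)} := by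
      refine ⟨w, haw, ?_⟩
      have hdet : det2 w (-x) = det2 x w := by simp [det2]; ring
      rw [hdet, hwx]
    apply le_csSup _ hmem
    refine ⟨F x, ?_⟩
    rintro d ⟨u, hu, rfl⟩
    have hdet : det2 u (-x) = det2 x u := by simp [det2]; ring
    rw [hdet]
    calc det2 x u ≤ F x * assocGauge F u := det_le hF hx u
      _ = F x := by rw [hu, mul_one]

end BirkhoffAux

theorem birkhoff_iff (F : ℝ × ℝ → ℝ) (hF : IsGauge F) (x y : ℝ × ℝ)
    (hx : x ≠ 0) (hy : y ≠ 0) :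
    det2 x y = F x * assocGauge F y ↔
      det2 y (-x) = assocGauge F y * assocGauge (assocGauge F) (-x) := by
  have h1 : det2 y (-x) = det2 x y := by simp [det2]; ring
  have h2 : assocGauge (assocGauge F) (-x) = F x := BirkhoffAux.assoc_assoc hF hx
  rw [h1, h2, mul_comm]
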